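/- Let G be a topological group, let (μ_i)_{i∈I} be a net of Borel probability measures on G UEB-converging to invariance, and let (g_i)_{i∈I} be any family of elements of G. Then the net of push-forward measures ((ρ_{g_i})_*(μ_i))_{i∈I}, where ρ_g(x) = x·g, also UEB-converges to invariance over G. -/

import Mathlib

open Filter Topology MeasureTheory Pointwise

/-- A net `(μ i)` of Borel probability measures on a topological group `G`
UEB-converges to invariance if, for every `g ∈ G` and every norm-bounded,
right-uniformly equicontinuous family `H` of bounded right-uniformly continuous
real-valued functions on `G`, `sup_{f ∈ H} |∫ f ∘ λ_g dμ_i − ∫ f dμ_i| → 0`. -/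
def UEBConvergesToInvariance {G ι : Type*} [Group G] [TopologicalSpace G]
    [MeasurableSpace G] (l : Filter ι) (μ : ι → Measure G) : Prop :=
  ∀ (g : G) (H : Set (G → ℝ)),
    (∃ C : ℝ, ∀ f ∈ H, ∀ x, |f x| ≤ C) →
    (∀ ε > 0, ∃ U ∈ 𝓝 (1 : G), ∀ f ∈ H, ∀ x y : G, y * x⁻¹ ∈ U → |f x - f y| ≤ ε) →
    ∀ ε > 0, ∀ᶠ i in l, ∀ f ∈ H,
      |∫ x, f (g * x) ∂(μ i) - ∫ x, f x ∂(μ i)| ≤ ε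

/-- If `(μ i)` UEB-converges to invariance over `G` and `(g i)` is any family in `G`,
then the right-translated net `((ρ_{g_i})_*(μ_i))` also UEB-converges to invariance. -/
theorem stmt10 {G ι : Type*} [Group G] [TopologicalSpace G] [IsTopologicalGroup G]
    [MeasurableSpace G] [BorelSpace G] (l : Filter ι)
    (μ : ι → Measure G) (hprob : ∀ i, IsProbabilityMeasure (μ i))
    (hUEB : UEBConvergesToInvariance l μ) (g : ι → G) :
    UEBConvergesToInvariance l (fun i => (μ i).map (fun x => x * g i)) := by
  intro g0 H hbdd hequi ε hε
  -- the family of all right translates of functions in H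
  set H' : Set (G → ℝ) := {φ | ∃ f ∈ H, ∃ h : G, φ = fun x => f (x * h)} with hH'
  have hbdd' : ∃ C : ℝ, ∀ φ ∈ H', ∀ x, |φ x| ≤ C := by
    obtain ⟨C, hC⟩ := hbdd
    exact ⟨C, fun φ hφ x => by
      obtain ⟨f, hf, h, rfl⟩ := hφ; exact hC f hf _⟩
  have hequi' : ∀ δ > 0, ∃ U ∈ 𝓝 (1 : G), ∀ φ ∈ H', ∀ x y : G,
      y * x⁻¹ ∈ U → |φ x - φ y| ≤ δ := by
    intro δ hδ
    obtain ⟨U, hU, hUH⟩ := hequi δ hδ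
    refine ⟨U, hU, fun φ hφ x y hxy => ?_⟩
    obtain ⟨f, hf, h, rfl⟩ := hφ
    have : (y * h) * (x * h)⁻¹ ∈ U := by
      simpa [mul_assoc] using hxy
    exact hUH f hf (x * h) (y * h) this
  -- each f ∈ H is continuous
  have hcont : ∀ f ∈ H, Continuous f := by
    intro f hf
    rw [continuous_iff_continuousAt]
    intro x
    rw [ContinuousAt, Metric.tendsto_nhds]
    intro δ hδ
    obtain ⟨U, hU, hUH⟩ := hequi (δ / 2) (by linarith)
    have hnb : ∀ᶠ y in 𝓝 x, y * x⁻¹ ∈ U := by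
      have : Continuous fun y : G => y * x⁻¹ := continuous_id.mul continuous_const
      have := this.continuousAt (x := x)
      exact this.preimage_mem_nhds (by simpa using hU)
    filter_upwards [hnb] with y hy
    have := hUH f hf x y hy
    rw [Real.dist_eq, abs_sub_comm]
    linarith
  have key := hUEB g0 H' hbdd' hequi' ε hε
  filter_upwards [key] with i hi f hf
  have hφ : (fun x => f (x * g i)) ∈ H' := ⟨f, hf, g i, rfl⟩
  have h1 : ∫ x, f (g0 * x) ∂((μ i).map (fun x => x * g i))
      = ∫ x, f (g0 * x * g i) ∂(μ i) := by
    have := integral_map (μ := μ i) (φ := fun x => x * g i)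
      (f := fun x => f (g0 * x)) (measurable_mul_const (g i)).aemeasurable
      (((hcont f hf).comp (continuous_const.mul continuous_id)).aestronglyMeasurable)
    simpa [mul_assoc] using this
  have h2 : ∫ x, f x ∂((μ i).map (fun x => x * g i)) = ∫ x, f (x * g i) ∂(μ i) :=
    integral_map (measurable_mul_const (g i)).aemeasurable
      (hcont f hf).aestronglyMeasurable
  simpa [h1, h2, mul_assoc] using hi _ hφ
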